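/- Let d be a K-quasi-metric on a set X (possibly with a point ω at infinity), let (x_n) be a sequence in X \ {ω}, and let y, z ∈ X \ {ω} be distinct with d(x_n,y) ↛ 0 and d(x_n,z) ↛ 0. Suppose (d(x_n,x_m)·d(y,z))/(d(x_n,y)·d(x_m,z)) → 0 as n,m → ∞. Then exactly one of the following holds: (a) d(x_n, x) is bounded for every x ∈ X \ {ω} and d(x_n,x_m) → 0; or (b) d(x_n, x) → ∞ for every x ∈ X \ {ω}. -/

import Mathlib

open Filter ENNReal

/-- Dichotomy for Möbius-Cauchy sequences with respect to a
K-quasi-metric (possibly with a point ω at infinity): the sequence is either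
bounded with d(x_n,x_m) → 0, or it diverges to infinity — and exactly one of
the two alternatives holds. -/
theorem mobius_cauchy_dichotomy {X : Type*} (d : X → X → ℝ≥0∞) (K : ℝ≥0∞)
    (hK : 1 ≤ K) (hKfin : K ≠ ⊤)
    (hsymm : ∀ x y, d x y = d y x)
    (hzero : ∀ x y, d x y = 0 ↔ x = y)
    (hquasi : ∀ x y z, d x z ≤ K * max (d x y) (d y z))
    (ω : X)
    (hω : ∀ x, x ≠ ω → d x ω = ⊤)
    (hfin : ∀ x y, x ≠ ω → y ≠ ω → d x y ≠ ⊤)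
    (x : ℕ → X) (hxω : ∀ n, x n ≠ ω)
    (y z : X) (hyz : y ≠ z) (hyω : y ≠ ω) (hzω : z ≠ ω)
    (hy : ¬ Tendsto (fun n => d (x n) y) atTop (nhds 0))
    (hz : ¬ Tendsto (fun n => d (x n) z) atTop (nhds 0))
    (hc : Tendsto
      (fun p : ℕ × ℕ => d (x p.1) (x p.2) * d y z / (d (x p.1) y * d (x p.2) z))
      (atTop ×ˢ atTop) (nhds 0)) :
    Xor'
      ((∀ x' : X, x' ≠ ω → ∃ B : ℝ≥0∞, B ≠ ⊤ ∧ ∀ n, d (x n) x' ≤ B) ∧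
        Tendsto (fun p : ℕ × ℕ => d (x p.1) (x p.2)) (atTop ×ˢ atTop) (nhds 0))
      (∀ x' : X, x' ≠ ω → Tendsto (fun n => d (x n) x') atTop (nhds ⊤)) := by
  have hD0 : d y z ≠ 0 := fun h => hyz ((hzero y z).mp h)
  have hDt : d y z ≠ ⊤ := hfin y z hyω hzω
  have hK0 : K ≠ 0 := by rintro rfl; simp at hK
  have hat : ∀ n, d (x n) y ≠ ⊤ := fun n => hfin _ _ (hxω n) hyω
  have hbt : ∀ n, d (x n) z ≠ ⊤ := fun n => hfin _ _ (hxω n) hzω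
  -- smallness extraction from hc
  have hsmall : ∀ η : ℝ≥0∞, 0 < η → ∃ N : ℕ, ∀ n, N ≤ n → ∀ m, N ≤ m →
      d (x n) (x m) * d y z / (d (x n) y * d (x m) z) < η := by
    intro η hη
    have h := hc.eventually_lt_const hη
    rw [prod_atTop_atTop_eq, eventually_atTop] at h
    obtain ⟨p, hp⟩ := h
    exact ⟨max p.1 p.2, fun n hn m hm =>
      hp (n, m) ⟨le_trans (le_max_left _ _) hn, le_trans (le_max_right _ _) hm⟩⟩
  obtain ⟨N1, hN1⟩ := hsmall 1 zero_lt_one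
  -- eventually d (x n) y ≠ 0
  have haN1 : ∀ n, N1 ≤ n → d (x n) y ≠ 0 := by
    intro n hn h0
    have hxn : x n = y := (hzero _ _).mp h0
    have hall : ∀ m, N1 ≤ m → d (x m) y = 0 := by
      intro m hm
      by_contra hne
      have hc' := hN1 n hn m hm
      have hnum : d (x n) (x m) ≠ 0 := by
        rw [hxn]
        intro h
        exact hne ((hzero _ _).mpr ((hzero _ _).mp h).symm)
      rw [h0, zero_mul, ENNReal.div_zero (mul_ne_zero hnum hD0)] at hc'
      exact absurd hc' (by simp)
    refine hy (Tendsto.congr' ?_ tendsto_const_nhds)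
    rw [EventuallyEq, eventually_atTop]
    exact ⟨N1, fun m hm => (hall m hm).symm⟩
  -- eventually d (x m) z ≠ 0
  have hbN1 : ∀ m, N1 ≤ m → d (x m) z ≠ 0 := by
    intro m hm h0
    have hxm : x m = z := (hzero _ _).mp h0
    have hall : ∀ n, N1 ≤ n → d (x n) z = 0 := by
      intro n hn
      by_contra hne
      have hc' := hN1 n hn m hm
      have hnum : d (x n) (x m) ≠ 0 := by
        rw [hxm]; exact hne
      rw [h0, mul_zero, ENNReal.div_zero (mul_ne_zero hnum hD0)] at hc'
      exact absurd hc' (by simp)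
    refine hz (Tendsto.congr' ?_ tendsto_const_nhds)
    rw [EventuallyEq, eventually_atTop]
    exact ⟨N1, fun n hn => (hall n hn).symm⟩
  -- quantitative consequence of hc
  have hmul : ∀ η : ℝ≥0∞, 0 < η → ∃ N : ℕ, N1 ≤ N ∧ ∀ n, N ≤ n → ∀ m, N ≤ m →
      d (x n) (x m) * d y z ≤ η * (d (x n) y * d (x m) z) := by
    intro η hη
    obtain ⟨N, hN⟩ := hsmall η hη
    refine ⟨max N N1, le_max_right _ _, fun n hn m hm => ?_⟩
    have h1 := hN n (le_trans (le_max_left _ _) hn) m (le_trans (le_max_left _ _) hm)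
    have hq0 : d (x n) y * d (x m) z ≠ 0 :=
      mul_ne_zero (haN1 n (le_trans (le_max_right _ _) hn))
        (hbN1 m (le_trans (le_max_right _ _) hm))
    have hqt : d (x n) y * d (x m) z ≠ ⊤ := ENNReal.mul_ne_top (hat n) (hbt m)
    exact (ENNReal.div_le_iff hq0 hqt).mp h1.le
  -- the two alternatives cannot both hold
  have hnotboth : ¬ (((∀ x' : X, x' ≠ ω → ∃ B : ℝ≥0∞, B ≠ ⊤ ∧ ∀ n, d (x n) x' ≤ B) ∧
      Tendsto (fun p : ℕ × ℕ => d (x p.1) (x p.2)) (atTop ×ˢ atTop) (nhds 0)) ∧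
      (∀ x' : X, x' ≠ ω → Tendsto (fun n => d (x n) x') atTop (nhds ⊤))) := by
    rintro ⟨⟨hbdd, -⟩, hdiv⟩
    obtain ⟨B, hBt, hB⟩ := hbdd y hyω
    obtain ⟨n, hn⟩ := ((hdiv y hyω).eventually_const_lt hBt.lt_top).exists
    exact absurd (hB n) (not_le.mpr hn)
  rw [Xor']
  by_cases hP : ∀ M : ℝ≥0∞, M ≠ ⊤ → ∃ N : ℕ, ∀ n, N ≤ n → M < d (x n) y
  · -- divergence alternative
    right
    have hB : ∀ x' : X, x' ≠ ω → Tendsto (fun n => d (x n) x') atTop (nhds ⊤) := by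
      intro x' hx'
      apply ENNReal.tendsto_nhds_top
      intro k
      obtain ⟨N, hN⟩ := hP (K * max (k : ℝ≥0∞) (d x' y))
        (ENNReal.mul_ne_top hKfin
          (max_lt (ENNReal.natCast_ne_top k).lt_top (hfin x' y hx' hyω).lt_top).ne)
      rw [eventually_atTop]
      refine ⟨N, fun n hn => ?_⟩
      by_contra hle
      push_neg at hle
      have h1 : d (x n) y ≤ K * max (d (x n) x') (d x' y) := hquasi _ _ _
      have h2 : K * max (d (x n) x') (d x' y) ≤ K * max (k : ℝ≥0∞) (d x' y) :=
        mul_le_mul_right (max_le_max hle le_rfl) K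
      exact absurd (h1.trans h2) (not_le.mpr (hN n hn))
    exact ⟨hB, fun hA => hnotboth ⟨hA, hB⟩⟩
  · -- bounded alternative
    left
    push_neg at hP
    obtain ⟨M0, hM0t, hM0⟩ := hP
    set M : ℝ≥0∞ := max M0 (d y z) with hMdef
    have hMt : M ≠ ⊤ := (max_lt hM0t.lt_top hDt.lt_top).ne
    have hDM : d y z ≤ M := le_max_right _ _
    have hM0ne : M ≠ 0 := fun h => hD0 (le_zero_iff.mp (h ▸ hDM))
    have hMfreq : ∀ N : ℕ, ∃ n, N ≤ n ∧ d (x n) y ≤ M := by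
      intro N
      obtain ⟨n, hn, hle⟩ := hM0 N
      exact ⟨n, hn, hle.trans (le_max_left _ _)⟩
    have hKM0 : K * M ≠ 0 := mul_ne_zero hK0 hM0ne
    have hKMt : K * M ≠ ⊤ := ENNReal.mul_ne_top hKfin hMt
    have h2K0 : (2 : ℝ≥0∞) * K ≠ 0 := mul_ne_zero two_ne_zero hK0
    have h2Kt : (2 : ℝ≥0∞) * K ≠ ⊤ := ENNReal.mul_ne_top ENNReal.ofNat_ne_top hKfin
    set η : ℝ≥0∞ := (d y z / (2 * K)) / (K * M) with hηdef
    have hη0 : 0 < η := ENNReal.div_pos (ENNReal.div_pos hD0 h2Kt).ne' hKMt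
    obtain ⟨N, hNN1, hN⟩ := hmul η hη0
    obtain ⟨m0, hm0N, hm0⟩ := hMfreq N
    have hbm0 : d (x m0) z ≤ K * M :=
      (hquasi (x m0) y z).trans (mul_le_mul_right (max_le hm0 hDM) K)
    -- key estimate : 2K d(x_n, x_{m0}) ≤ d(x_n, y)
    have key : ∀ n, N ≤ n → 2 * K * d (x n) (x m0) ≤ d (x n) y := by
      intro n hn
      have h1 : d (x n) (x m0) * d y z ≤ η * (d (x n) y * d (x m0) z) :=
        hN n hn m0 hm0N
      have h2 : η * (d (x n) y * d (x m0) z) ≤ η * (d (x n) y * (K * M)) :=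
        mul_le_mul_right (mul_le_mul_right hbm0 _) _
      have h3 : η * (d (x n) y * (K * M)) = d (x n) y * (d y z / (2 * K)) := by
        rw [mul_comm η, mul_assoc, hηdef, ENNReal.mul_div_cancel hKM0 hKMt]
      have h4 : d (x n) (x m0) * d y z ≤ d (x n) y * (d y z / (2 * K)) :=
        (h1.trans h2).trans_eq h3
      have h5 : (2 * K * d (x n) (x m0)) * d y z ≤ d (x n) y * d y z := by
        calc (2 * K * d (x n) (x m0)) * d y z
            = (2 * K) * (d (x n) (x m0) * d y z) := by ring
          _ ≤ (2 * K) * (d (x n) y * (d y z / (2 * K))) := mul_le_mul_right h4 _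
          _ = d (x n) y * ((d y z / (2 * K)) * (2 * K)) := by ring
          _ = d (x n) y * d y z := by rw [ENNReal.div_mul_cancel h2K0 h2Kt]
      exact (ENNReal.mul_le_mul_iff_left hD0 hDt).mp h5
    -- bound on d(x_n, y) for n ≥ N
    have boundA : ∀ n, N ≤ n → d (x n) y ≤ 2 * (K * M) := by
      intro n hn
      have hq : d (x n) y ≤ K * max (d (x n) (x m0)) (d (x m0) y) := hquasi _ _ _
      rcases le_total (d (x n) (x m0)) M with h | h
      · have : max (d (x n) (x m0)) (d (x m0) y) ≤ M := max_le h hm0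
        exact (hq.trans (mul_le_mul_right this K)).trans
          (le_mul_of_one_le_left zero_le one_le_two)
      · exfalso
        have hd0 : d (x n) (x m0) ≠ 0 := fun h0 =>
          hM0ne (le_zero_iff.mp (h0 ▸ h))
        have hdt : d (x n) (x m0) ≠ ⊤ := hfin _ _ (hxω n) (hxω m0)
        have hmax : max (d (x n) (x m0)) (d (x m0) y) = d (x n) (x m0) :=
          max_eq_left (hm0.trans h)
        rw [hmax] at hq
        have h6 : 2 * K * d (x n) (x m0) ≤ K * d (x n) (x m0) :=
          (key n hn).trans hq
        rw [mul_assoc] at h6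
        have hKd0 : K * d (x n) (x m0) ≠ 0 := mul_ne_zero hK0 hd0
        have hKdt : K * d (x n) (x m0) ≠ ⊤ := ENNReal.mul_ne_top hKfin hdt
        have h6' : (2 : ℝ≥0∞) * (K * d (x n) (x m0)) ≤ 1 * (K * d (x n) (x m0)) := by
          rw [one_mul]; exact h6
        have h7 : (2 : ℝ≥0∞) ≤ 1 := (ENNReal.mul_le_mul_iff_left hKd0 hKdt).mp h6'
        norm_num at h7
    -- global bounds
    set Ba : ℝ≥0∞ := (Finset.range N).sup (fun i => d (x i) y) ⊔ (2 * (K * M))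
      with hBadef
    have hBa : ∀ n, d (x n) y ≤ Ba := by
      intro n
      rcases lt_or_ge n N with h | h
      · exact le_trans (Finset.le_sup (f := fun i => d (x i) y) (Finset.mem_range.mpr h)) le_sup_left
      · exact le_trans (boundA n h) le_sup_right
    have hBat : Ba ≠ ⊤ := by
      refine (max_lt ?_ ?_).ne
      · exact (Finset.sup_lt_iff (by simp : (⊥ : ℝ≥0∞) < ⊤)).mpr
          (fun i _ => (hat i).lt_top)
      · exact (ENNReal.mul_ne_top ENNReal.ofNat_ne_top
          (ENNReal.mul_ne_top hKfin hMt)).lt_top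
    set Bb : ℝ≥0∞ := K * max Ba (d y z) with hBbdef
    have hBb : ∀ n, d (x n) z ≤ Bb := fun n =>
      (hquasi (x n) y z).trans (mul_le_mul_right (max_le_max (hBa n) le_rfl) K)
    have hBbt : Bb ≠ ⊤ :=
      ENNReal.mul_ne_top hKfin (max_lt hBat.lt_top hDt.lt_top).ne
    -- alternative (a)
    have hA1 : ∀ x' : X, x' ≠ ω → ∃ B : ℝ≥0∞, B ≠ ⊤ ∧ ∀ n, d (x n) x' ≤ B := by
      intro x' hx'
      refine ⟨K * max Ba (d y x'),
        ENNReal.mul_ne_top hKfin (max_lt hBat.lt_top (hfin y x' hyω hx').lt_top).ne,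
        fun n => ?_⟩
      exact (hquasi (x n) y x').trans (mul_le_mul_right (max_le_max (hBa n) le_rfl) K)
    have hCt : Ba * Bb / d y z ≠ ⊤ :=
      (ENNReal.div_lt_top (ENNReal.mul_ne_top hBat hBbt) hD0).ne
    have hA2 : Tendsto (fun p : ℕ × ℕ => d (x p.1) (x p.2)) (atTop ×ˢ atTop)
        (nhds 0) := by
      have htop : Tendsto (fun p : ℕ × ℕ =>
          (d (x p.1) (x p.2) * d y z / (d (x p.1) y * d (x p.2) z)) *
            (Ba * Bb / d y z)) (atTop ×ˢ atTop) (nhds 0) := by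
        simpa using ENNReal.Tendsto.mul_const hc (Or.inr hCt)
      refine tendsto_of_tendsto_of_tendsto_of_le_of_le'
        tendsto_const_nhds htop
        (Eventually.of_forall fun p => zero_le) ?_
      rw [prod_atTop_atTop_eq, eventually_atTop]
      refine ⟨(N1, N1), fun p hp => ?_⟩
      have hq0 : d (x p.1) y * d (x p.2) z ≠ 0 :=
        mul_ne_zero (haN1 _ hp.1) (hbN1 _ hp.2)
      have hqt : d (x p.1) y * d (x p.2) z ≠ ⊤ := ENNReal.mul_ne_top (hat _) (hbt _)
      have heq : d (x p.1) (x p.2) * d y z =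
          (d (x p.1) (x p.2) * d y z / (d (x p.1) y * d (x p.2) z)) *
            (d (x p.1) y * d (x p.2) z) := (ENNReal.div_mul_cancel hq0 hqt).symm
      have hle2 : d (x p.1) (x p.2) * d y z ≤
          (d (x p.1) (x p.2) * d y z / (d (x p.1) y * d (x p.2) z)) * (Ba * Bb) :=
        heq.trans_le (mul_le_mul_right (mul_le_mul' (hBa _) (hBb _)) _)
      have h8 := (ENNReal.le_div_iff_mul_le (Or.inl hD0) (Or.inl hDt)).mpr hle2
      rwa [mul_div_assoc] at h8
    exact ⟨⟨hA1, hA2⟩, fun hBdiv => hnotboth ⟨⟨hA1, hA2⟩, hBdiv⟩⟩
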